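/- Let s, t > 1 be odd integers with gcd(s, t) = 1, and let k, k' : ZMod s and ℓ, ℓ' : ZMod t. Then the graph D_{k,ℓ} ⊔ D_{k',ℓ'} on ZMod s × ZMod t contains a Hamiltonian path if and only if both the graph F_k ⊔ F_{k'} on ZMod s contains a Hamiltonian path and the graph F_ℓ ⊔ F_{ℓ'} on ZMod t contains a Hamiltonian path. (A pair of product near-one-factors is perfect if and only if both constituent pairs are perfect.) -/

import Mathlib

/-- For `n ≥ 1` and `k : ZMod n`, the graph `F k` on vertex set `ZMod n`
in which distinct vertices `i` and `j` are adjacent iff `i + j = k`. -/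
def F (n : ℕ) (k : ZMod n) : SimpleGraph (ZMod n) where
  Adj i j := i ≠ j ∧ i + j = k
  symm := ⟨fun i j ⟨h1, h2⟩ => ⟨h1.symm, by rwa [add_comm]⟩⟩
  loopless := ⟨fun i ⟨h, _⟩ => h rfl⟩

/-- For `s, t ≥ 1`, `k : ZMod s`, `ℓ : ZMod t`, the graph `D k ℓ` on vertex set
`ZMod s × ZMod t` in which distinct vertices `(i, j)` and `(i', j')` are
adjacent iff `i + i' = k` and `j + j' = ℓ`. -/
def D (s t : ℕ) (k : ZMod s) (ℓ : ZMod t) : SimpleGraph (ZMod s × ZMod t) where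
  Adj x y := x ≠ y ∧ x.1 + y.1 = k ∧ x.2 + y.2 = ℓ
  symm := ⟨fun x y ⟨h1, h2, h3⟩ =>
    ⟨h1.symm, by rwa [add_comm], by rwa [add_comm]⟩⟩
  loopless := ⟨fun x ⟨h, _⟩ => h rfl⟩

/-- A graph has a Hamiltonian path if some walk in it is a Hamiltonian path. -/
def HasHamiltonianPath {V : Type*} [DecidableEq V] (G : SimpleGraph V) : Prop :=
  ∃ (a b : V) (p : G.Walk a b), p.IsHamiltonian

/-! ### Auxiliary material -/

/-- The zig-zag exponent sequence: `0, 1, -1, 2, -2, …`. -/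
def ee (i : ℕ) : ℤ := if i % 2 = 0 then -(i / 2 : ℕ) else (i / 2 : ℕ) + 1

lemma ee_add (i : ℕ) : ee i + ee (i + 1) = if i % 2 = 0 then 1 else 0 := by
  simp only [ee]; split <;> split <;> omega

lemma ee_inj {i j : ℕ} (h : ee i = ee j) : i = j := by
  simp only [ee] at h; split at h <;> split at h <;> omega

lemma ee_bound {n i : ℕ} (hodd : Odd n) (hi : i < n) :
    -(n : ℤ) < 2 * ee i ∧ 2 * ee i < n := by
  obtain ⟨m, hm⟩ := hodd; simp only [ee]; split <;> omega

/-- Generic construction of a Hamiltonian path in a "double near-one-factor" graph. -/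
lemma ham_construct {V : Type*} [AddCommGroup V] [Fintype V] [DecidableEq V]
    {G : SimpleGraph V} (c d : V) (n : ℕ) (hn : Fintype.card V = n) (hodd : Odd n)
    (hd : ∀ m : ℤ, m • d = 0 → (n : ℤ) ∣ m)
    (hadj : ∀ x y : V, x ≠ y → (x + y = c + c + d ∨ x + y = c + c) → G.Adj x y) :
    HasHamiltonianPath G := by
  have hn1 : 1 ≤ n := hodd.pos
  set f : ℕ → V := fun i => c + ee i • d with hf
  have hinj : ∀ i < n, ∀ j < n, f i = f j → i = j := by
    intro i hi j hj hij
    have h1 : (ee i - ee j) • d = 0 := by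
      have : ee i • d = ee j • d := by
        have := hij; simp only [hf] at this
        exact add_left_cancel this
      rw [sub_smul, this, sub_self]
    have h2 : (n : ℤ) ∣ (ee i - ee j) := hd _ h1
    have bi := ee_bound hodd hi
    have bj := ee_bound hodd hj
    have : ee i - ee j = 0 :=
      Int.eq_zero_of_dvd_of_natAbs_lt_natAbs h2 (by omega)
    exact ee_inj (by linarith)
  have hstep : ∀ i, i + 1 < n → G.Adj (f i) (f (i + 1)) := by
    intro i hi
    refine hadj _ _ (fun h => by have := hinj i (by omega) (i+1) (by omega) h; omega) ?_
    have : f i + f (i + 1) = c + c + (ee i + ee (i + 1)) • d := by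
      simp only [hf, add_smul]; abel
    rw [this, ee_add]
    split
    · left; rw [one_smul]
    · right; rw [zero_smul, add_zero]
  have key : ∀ i, i < n → ∃ p : G.Walk (f 0) (f i), p.support = (List.range (i + 1)).map f := by
    intro i
    induction i with
    | zero => intro _; exact ⟨SimpleGraph.Walk.nil, by rw [List.range_succ]; simp⟩
    | succ i ih =>
      intro hi
      obtain ⟨p, hp⟩ := ih (by omega)
      refine ⟨p.concat (hstep i hi), ?_⟩
      rw [SimpleGraph.Walk.support_concat, hp]
      simp [List.range_succ]
  obtain ⟨p, hp⟩ := key (n - 1) (by omega)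
  have hn' : n - 1 + 1 = n := by omega
  have hl : p.support = (List.range n).map f := by rw [hp, hn']
  have hnodup : p.support.Nodup := by
    rw [hl]
    exact (List.nodup_range : (List.range n).Nodup).map_on (fun i hi j hj h =>
      hinj i (List.mem_range.mp hi) j (List.mem_range.mp hj) h)
  have hpath : p.IsPath := SimpleGraph.Walk.IsPath.mk' hnodup
  refine ⟨_, _, p, hpath.isHamiltonian_iff.mpr ?_⟩
  intro w
  have hcard : p.support.toFinset = Finset.univ := by
    apply Finset.eq_univ_of_card
    rw [List.toFinset_card_of_nodup hnodup, hl, List.length_map, List.length_range, hn]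
  have : w ∈ p.support.toFinset := by rw [hcard]; exact Finset.mem_univ w
  exact List.mem_toFinset.mp this

/-- Generic obstruction: a graph whose edges project to two near-one-factors of
`ZMod n` can only have a Hamiltonian path if the difference of labels is a unit. -/
lemma ham_forward {V : Type*} [DecidableEq V] {G : SimpleGraph V} {n : ℕ} (hodd : Odd n)
    (f : V → ZMod n) (hf : Function.Surjective f) (k k' : ZMod n)
    (hadj : ∀ a b : V, G.Adj a b → f a + f b = k ∨ f a + f b = k')
    (h : HasHamiltonianPath G) : IsUnit (k' - k) := by
  have hn0 : n ≠ 0 := by rintro rfl; have := Nat.odd_iff.mp hodd; omega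
  haveI : NeZero n := ⟨hn0⟩
  by_contra hu
  set g := Nat.gcd (k' - k).val n with hgdef
  have hgdvd : g ∣ n := Nat.gcd_dvd_right _ _
  have hgval : g ∣ (k' - k).val := Nat.gcd_dvd_left _ _
  have hg1 : g ≠ 1 := by
    intro h1
    apply hu
    have : IsUnit (((k' - k).val : ZMod n)) := (ZMod.isUnit_iff_coprime _ n).mpr h1
    rwa [ZMod.natCast_val, ZMod.cast_id] at this
  have hgodd : Odd g := hodd.of_dvd_nat hgdvd
  have hg0 : g ≠ 0 := by intro h0; rw [h0] at hgdvd; exact hn0 (Nat.eq_zero_of_zero_dvd hgdvd)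
  have hg3 : 3 ≤ g := by
    rcases hgodd with ⟨m, hm⟩; omega
  haveI : NeZero g := ⟨hg0⟩
  set ρ : ZMod n →+* ZMod g := ZMod.castHom hgdvd (ZMod g) with hρ
  have hρsurj : Function.Surjective ρ := by
    intro y
    refine ⟨((y.val : ℕ) : ZMod n), ?_⟩
    rw [hρ, map_natCast, ZMod.natCast_val, ZMod.cast_id]
  have hkk : ρ k' = ρ k := by
    have : ρ (k' - k) = 0 := by
      have : (k' - k) = (((k' - k).val : ℕ) : ZMod n) := by
        rw [ZMod.natCast_val, ZMod.cast_id]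
      rw [this, map_natCast, ZMod.natCast_eq_zero_iff]
      exact hgval
    have := sub_eq_zero.mp (by rwa [map_sub] at this)
    exact this
  have inv : ∀ (a b : V) (p : G.Walk a b),
      ρ (f b) = ρ (f a) ∨ ρ (f b) = ρ k - ρ (f a) := by
    intro a b p
    induction p with
    | nil => left; rfl
    | @cons a c b hac q ih =>
      have hc : ρ (f c) = ρ k - ρ (f a) := by
        rcases hadj a c hac with h1 | h1
        · rw [eq_sub_iff_add_eq, ← map_add, add_comm, h1]
        · rw [eq_sub_iff_add_eq, ← map_add, add_comm, h1, hkk]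
      rcases ih with h2 | h2
      · right; rw [h2, hc]
      · left; rw [h2, hc]; ring
  obtain ⟨a, b, p, hp⟩ := h
  have hall : ∀ v : V, ρ (f v) = ρ (f a) ∨ ρ (f v) = ρ k - ρ (f a) := by
    intro v
    have hv : v ∈ p.support := hp.mem_support v
    exact inv a v (p.takeUntil v hv)
  have hsub : (Finset.univ : Finset (ZMod g)) ⊆ {ρ (f a), ρ k - ρ (f a)} := by
    intro y _
    obtain ⟨x, hx⟩ := hρsurj y
    obtain ⟨v, hv⟩ := hf x
    rcases hall v with h1 | h1 <;>
      simp [Finset.mem_insert, Finset.mem_singleton, ← hx, ← hv, h1]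
  have hcard : Fintype.card (ZMod g) ≤ 2 := by
    calc Fintype.card (ZMod g) = (Finset.univ : Finset (ZMod g)).card := rfl
    _ ≤ ({ρ (f a), ρ k - ρ (f a)} : Finset (ZMod g)).card := Finset.card_le_card hsub
    _ ≤ 2 := Finset.card_insert_le _ _ |>.trans (by simp)
  rw [ZMod.card g] at hcard
  omega

lemma two_isUnit {m : ℕ} (hodd : Odd m) : IsUnit (2 : ZMod m) := by
  have : ((2 : ℕ) : ZMod m) = 2 := by norm_num
  rw [← this, ZMod.isUnit_iff_coprime]
  exact hodd.coprime_two_left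

lemma half_add_half {m : ℕ} (hodd : Odd m) (a : ZMod m) :
    (2 : ZMod m)⁻¹ * a + (2 : ZMod m)⁻¹ * a = a := by
  have h1 : (2 : ZMod m)⁻¹ * 2 = 1 := ZMod.inv_mul_of_unit 2 (two_isUnit hodd)
  calc (2 : ZMod m)⁻¹ * a + (2 : ZMod m)⁻¹ * a = (2 : ZMod m)⁻¹ * 2 * a := by ring
  _ = a := by rw [h1, one_mul]

lemma zsmul_unit_dvd {m : ℕ} [NeZero m] {d : ZMod m} (hd : IsUnit d) {q : ℤ}
    (h : q • d = 0) : (m : ℤ) ∣ q := by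
  rw [zsmul_eq_mul] at h
  have : ((q : ℤ) : ZMod m) = 0 := (hd.mul_left_eq_zero).mp h
  exact (ZMod.intCast_zmod_eq_zero_iff_dvd q m).mp this

/-- The one-dimensional characterization. -/
lemma F_iff {m : ℕ} (hm : 1 < m) (hodd : Odd m) (a b : ZMod m) :
    HasHamiltonianPath (F m a ⊔ F m b) ↔ IsUnit (b - a) := by
  haveI : NeZero m := ⟨by omega⟩
  constructor
  · intro h
    refine ham_forward hodd id Function.surjective_id a b ?_ h
    intro x y hxy
    rcases hxy with ⟨-, h1⟩ | ⟨-, h1⟩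
    · exact Or.inl h1
    · exact Or.inr h1
  · intro hu
    refine ham_construct ((2 : ZMod m)⁻¹ * a) (b - a) m (ZMod.card m) hodd
      (fun q hq => zsmul_unit_dvd hu hq) ?_
    intro x y hxy hsum
    have hcc : (2 : ZMod m)⁻¹ * a + (2 : ZMod m)⁻¹ * a = a := half_add_half hodd a
    rcases hsum with h1 | h1
    · right
      exact ⟨hxy, by rw [h1, hcc]; ring⟩
    · left
      exact ⟨hxy, by rw [h1, hcc]⟩

/-- The two-dimensional characterization. -/
lemma D_iff {s t : ℕ} (hs : 1 < s) (ht : 1 < t)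
    (hsodd : Odd s) (htodd : Odd t) (hco : Nat.Coprime s t)
    (k k' : ZMod s) (ℓ ℓ' : ZMod t) :
    HasHamiltonianPath (D s t k ℓ ⊔ D s t k' ℓ') ↔ IsUnit (k' - k) ∧ IsUnit (ℓ' - ℓ) := by
  haveI : NeZero s := ⟨by omega⟩
  haveI : NeZero t := ⟨by omega⟩
  constructor
  · intro h
    constructor
    · refine ham_forward hsodd Prod.fst Prod.fst_surjective k k' ?_ h
      intro x y hxy
      rcases hxy with ⟨-, h1, -⟩ | ⟨-, h1, -⟩
      · exact Or.inl h1
      · exact Or.inr h1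
    · refine ham_forward htodd Prod.snd Prod.snd_surjective ℓ ℓ' ?_ h
      intro x y hxy
      rcases hxy with ⟨-, -, h1⟩ | ⟨-, -, h1⟩
      · exact Or.inl h1
      · exact Or.inr h1
  · rintro ⟨hu1, hu2⟩
    have hcards : Fintype.card (ZMod s × ZMod t) = s * t := by
      rw [Fintype.card_prod, ZMod.card, ZMod.card]
    have hodd : Odd (s * t) := Nat.odd_mul.mpr ⟨hsodd, htodd⟩
    refine ham_construct ((2 : ZMod s)⁻¹ * k, (2 : ZMod t)⁻¹ * ℓ) (k' - k, ℓ' - ℓ)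
      (s * t) hcards hodd ?_ ?_
    · intro q hq
      rw [Prod.ext_iff] at hq
      have h1 : (s : ℤ) ∣ q := zsmul_unit_dvd hu1 hq.1
      have h2 : (t : ℤ) ∣ q := zsmul_unit_dvd hu2 hq.2
      have hcop : IsCoprime (s : ℤ) (t : ℤ) := by
        rw [Int.isCoprime_iff_gcd_eq_one]
        exact_mod_cast hco
      have := hcop.mul_dvd h1 h2
      exact_mod_cast this
    · intro x y hxy hsum
      have hcc1 : (2 : ZMod s)⁻¹ * k + (2 : ZMod s)⁻¹ * k = k := half_add_half hsodd k
      have hcc2 : (2 : ZMod t)⁻¹ * ℓ + (2 : ZMod t)⁻¹ * ℓ = ℓ := half_add_half htodd ℓ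
      rcases hsum with h1 | h1 <;> rw [Prod.ext_iff] at h1
      · right
        refine ⟨hxy, ?_, ?_⟩
        · have := h1.1; simp only [Prod.fst_add] at this
          rw [this]
          calc (2 : ZMod s)⁻¹ * k + (2 : ZMod s)⁻¹ * k + (k' - k) = k + (k' - k) := by rw [hcc1]
          _ = k' := by ring
        · have := h1.2; simp only [Prod.snd_add] at this
          rw [this]
          calc (2 : ZMod t)⁻¹ * ℓ + (2 : ZMod t)⁻¹ * ℓ + (ℓ' - ℓ) = ℓ + (ℓ' - ℓ) := by rw [hcc2]
          _ = ℓ' := by ring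
      · left
        refine ⟨hxy, ?_, ?_⟩
        · have := h1.1; simp only [Prod.fst_add] at this
          rw [this]; exact hcc1
        · have := h1.2; simp only [Prod.snd_add] at this
          rw [this]; exact hcc2

theorem stmt_12 (s t : ℕ) (hs : 1 < s) (ht : 1 < t)
    (hsodd : Odd s) (htodd : Odd t) (hco : Nat.Coprime s t)
    (k k' : ZMod s) (ℓ ℓ' : ZMod t) :
    HasHamiltonianPath (D s t k ℓ ⊔ D s t k' ℓ') ↔
      HasHamiltonianPath (F s k ⊔ F s k') ∧ HasHamiltonianPath (F t ℓ ⊔ F t ℓ') := by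
  rw [D_iff hs ht hsodd htodd hco, F_iff hs hsodd, F_iff ht htodd]
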